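/- Theorem 1 (domain generalization bound): Let S_1,...,S_T and T be joint distributions on X×Y with Y finite, L a loss bounded in [0,1], Φ a Markov kernel X→Z inducing latent class-conditional distributions. If (i) for all i,j and all y, d_TV(S_i(z|y), S_j(z|y)) ≤ κ, and (ii) for all y, min_t d_TV(T(x|y), S_t(x|y)) ≤ ε, then the balanced error rate satisfies BER_T(h,Φ) ≤ (1/T) Σ_t BER_{S_t}(h,Φ) + κ + α_TV(Φ)·ε for any classifier h : Z → Y. -/

import Mathlib

open MeasureTheory ProbabilityTheory

/-- Total variation distance between two measures. -/
noncomputable def tvDist {Z : Type*} [MeasurableSpace Z]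
    (P Q : Measure Z) : ℝ :=
  ⨆ A : {A : Set Z // MeasurableSet A}, |(P A.1).toReal - (Q A.1).toReal|

/-- Dobrushin coefficient of a kernel. -/
noncomputable def dobrushin {X Z : Type*} [MeasurableSpace X] [MeasurableSpace Z]
    (Φ : Kernel X Z) : ℝ :=
  ⨆ p : X × X, tvDist (Φ p.1) (Φ p.2)

/-- Balanced error rate of classifier `h` for an environment given by its
class-conditional feature distributions `D y`, with latent conditionals given by
pushforward through the kernel `Φ`. -/
noncomputable def BER {X Z Y : Type*} [MeasurableSpace X] [MeasurableSpace Z] [Fintype Y]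
    (D : Y → Measure X) (Φ : Kernel X Z) (h : Z → Y) (L : Y → Y → ℝ) : ℝ :=
  (1 / (Fintype.card Y) : ℝ) * ∑ y : Y, ∫ z, L (h z) y ∂((D y).bind Φ)

section Helpers

variable {Z : Type*} [MeasurableSpace Z]

lemma tv_bdd (P Q : Measure Z) [IsProbabilityMeasure P] [IsProbabilityMeasure Q] :
    BddAbove (Set.range fun A : {A : Set Z // MeasurableSet A} =>
      |(P A.1).toReal - (Q A.1).toReal|) := by
  refine ⟨1, ?_⟩
  rintro x ⟨A, rfl⟩
  have h1 : (P A.1).toReal ≤ 1 := by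
    simpa using ENNReal.toReal_mono ENNReal.one_ne_top (prob_le_one (μ := P) (s := A.1))
  have h2 : (Q A.1).toReal ≤ 1 := by
    simpa using ENNReal.toReal_mono ENNReal.one_ne_top (prob_le_one (μ := Q) (s := A.1))
  have h3 : 0 ≤ (P A.1).toReal := ENNReal.toReal_nonneg
  have h4 : 0 ≤ (Q A.1).toReal := ENNReal.toReal_nonneg
  rw [abs_le]; constructor <;> linarith

lemma le_tv (P Q : Measure Z) [IsProbabilityMeasure P] [IsProbabilityMeasure Q]
    {A : Set Z} (hA : MeasurableSet A) :
    |(P A).toReal - (Q A).toReal| ≤ tvDist P Q :=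
  le_ciSup (tv_bdd P Q) ⟨A, hA⟩

lemma tv_nonneg (P Q : Measure Z) [IsProbabilityMeasure P] [IsProbabilityMeasure Q] :
    0 ≤ tvDist P Q := by
  have := le_tv P Q MeasurableSet.empty
  simpa using this

lemma tv_le_one (P Q : Measure Z) [IsProbabilityMeasure P] [IsProbabilityMeasure Q] :
    tvDist P Q ≤ 1 := by
  apply ciSup_le
  rintro ⟨A, hA⟩
  have h1 : (P A).toReal ≤ 1 := by
    simpa using ENNReal.toReal_mono ENNReal.one_ne_top (prob_le_one (μ := P) (s := A))
  have h2 : (Q A).toReal ≤ 1 := by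
    simpa using ENNReal.toReal_mono ENNReal.one_ne_top (prob_le_one (μ := Q) (s := A))
  have h3 : 0 ≤ (P A).toReal := ENNReal.toReal_nonneg
  have h4 : 0 ≤ (Q A).toReal := ENNReal.toReal_nonneg
  rw [abs_le]; constructor <;> linarith

lemma tv_comm (P Q : Measure Z) : tvDist P Q = tvDist Q P := by
  unfold tvDist
  congr 1; funext A; exact abs_sub_comm _ _

/-- Key layer-cake bound: for a measurable `f` with `0 ≤ f ≤ M`,
`∫ f dP - ∫ f dQ ≤ M * tvDist P Q`. -/
lemma integral_diff_le (P Q : Measure Z) [IsProbabilityMeasure P] [IsProbabilityMeasure Q]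
    {f : Z → ℝ} (hfm : Measurable f) {M : ℝ} (hM : 0 ≤ M)
    (hf0 : ∀ z, 0 ≤ f z) (hfM : ∀ z, f z ≤ M) :
    ∫ z, f z ∂P - ∫ z, f z ∂Q ≤ M * tvDist P Q := by
  have hint : ∀ (μ : Measure Z) [IsProbabilityMeasure μ], Integrable f μ := by
    intro μ _
    refine ⟨hfm.aestronglyMeasurable, ?_⟩
    apply HasFiniteIntegral.mono' (g := fun _ => M) (hasFiniteIntegral_const M)
    filter_upwards with z
    rw [Real.norm_eq_abs, abs_of_nonneg (hf0 z)]; exact hfM z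
  have layer : ∀ (μ : Measure Z) [IsProbabilityMeasure μ],
      ∫ z, f z ∂μ = ∫ t in Set.Ioc 0 M, ((μ {a : Z | t ≤ f a}).toReal) := by
    intro μ _
    exact (hint μ).integral_eq_integral_Ioc_meas_le
      (Filter.Eventually.of_forall hf0) (Filter.Eventually.of_forall hfM)
  have int_t : ∀ (μ : Measure Z) [IsProbabilityMeasure μ],
      Integrable (fun t : ℝ => (μ {a : Z | t ≤ f a}).toReal)
        (MeasureTheory.volume.restrict (Set.Ioc 0 M)) := by
    intro μ _
    have hanti : Antitone fun t : ℝ => μ {a : Z | t ≤ f a} :=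
      fun s t hst => measure_mono fun a ha => le_trans hst ha
    have hm : Measurable fun t : ℝ => (μ {a : Z | t ≤ f a}).toReal :=
      hanti.measurable.ennreal_toReal
    refine ⟨hm.aestronglyMeasurable, ?_⟩
    apply HasFiniteIntegral.mono' (g := fun _ => (1 : ℝ)) (hasFiniteIntegral_const 1)
    filter_upwards with t
    rw [Real.norm_eq_abs, abs_of_nonneg ENNReal.toReal_nonneg]
    simpa using ENNReal.toReal_mono ENNReal.one_ne_top (prob_le_one (μ := μ) (s := _))
  rw [layer P, layer Q, ← integral_sub (int_t P) (int_t Q)]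
  have hbound : ∀ t : ℝ,
      (P {a : Z | t ≤ f a}).toReal - (Q {a : Z | t ≤ f a}).toReal ≤ tvDist P Q := by
    intro t
    calc (P {a : Z | t ≤ f a}).toReal - (Q {a : Z | t ≤ f a}).toReal
        ≤ |(P {a : Z | t ≤ f a}).toReal - (Q {a : Z | t ≤ f a}).toReal| := le_abs_self _
      _ ≤ tvDist P Q := le_tv P Q (measurableSet_le measurable_const hfm)
  calc ∫ t in Set.Ioc 0 M,
        ((P {a : Z | t ≤ f a}).toReal - (Q {a : Z | t ≤ f a}).toReal)
      ≤ ∫ _t in Set.Ioc 0 M, tvDist P Q :=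
        integral_mono ((int_t P).sub (int_t Q)) (integrable_const _) hbound
    _ = M * tvDist P Q := by
        rw [setIntegral_const, measureReal_def, Real.volume_Ioc]
        simp [ENNReal.toReal_ofReal hM]

section Kernels

variable {X Z : Type*} [MeasurableSpace X] [MeasurableSpace Z]

lemma isProb_bind (μ : Measure X) [IsProbabilityMeasure μ]
    (Φ : Kernel X Z) [IsMarkovKernel Φ] : IsProbabilityMeasure (μ.bind Φ) := by
  constructor
  rw [Measure.bind_apply MeasurableSet.univ (Kernel.measurable Φ).aemeasurable]
  simp

lemma bind_toReal (μ : Measure X) [IsProbabilityMeasure μ]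
    (Φ : Kernel X Z) [IsMarkovKernel Φ] {A : Set Z} (hA : MeasurableSet A) :
    ((μ.bind Φ) A).toReal = ∫ x, ((Φ x) A).toReal ∂μ := by
  rw [Measure.bind_apply hA (Kernel.measurable Φ).aemeasurable]
  rw [integral_toReal (Φ.measurable_coe hA).aemeasurable]
  filter_upwards with x
  exact lt_of_le_of_lt prob_le_one ENNReal.one_lt_top

lemma dob_bdd (Φ : Kernel X Z) [IsMarkovKernel Φ] :
    BddAbove (Set.range fun p : X × X => tvDist (Φ p.1) (Φ p.2)) := by
  refine ⟨1, ?_⟩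
  rintro _ ⟨p, rfl⟩
  exact tv_le_one _ _

lemma dob_nonneg (Φ : Kernel X Z) [IsMarkovKernel Φ] [Nonempty X] :
    0 ≤ dobrushin Φ := by
  obtain ⟨x⟩ := ‹Nonempty X›
  exact le_trans (tv_nonneg (Φ x) (Φ x)) (le_ciSup (dob_bdd Φ) (x, x))

/-- Dobrushin contraction: total variation of pushed-forward measures. -/
lemma tv_bind_le (μ ν : Measure X) [IsProbabilityMeasure μ] [IsProbabilityMeasure ν]
    (Φ : Kernel X Z) [IsMarkovKernel Φ] :
    tvDist (μ.bind Φ) (ν.bind Φ) ≤ dobrushin Φ * tvDist μ ν := by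
  haveI := isProb_bind μ Φ
  haveI := isProb_bind ν Φ
  haveI : Nonempty X := Measure.nonempty_of_neZero μ
  apply ciSup_le
  rintro ⟨A, hA⟩
  set g : X → ℝ := fun x => ((Φ x) A).toReal with hgdef
  have hgm : Measurable g := (Φ.measurable_coe hA).ennreal_toReal
  have hg0 : ∀ x, 0 ≤ g x := fun x => ENNReal.toReal_nonneg
  have hα : 0 ≤ dobrushin Φ := dob_nonneg Φ
  have hosc : ∀ x x', g x - g x' ≤ dobrushin Φ := by
    intro x x'
    calc g x - g x' ≤ |g x - g x'| := le_abs_self _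
      _ ≤ tvDist (Φ x) (Φ x') := le_tv _ _ hA
      _ ≤ dobrushin Φ := le_ciSup (dob_bdd Φ) (x, x')
  set c := sInf (Set.range g) with hcdef
  have hbdd : BddBelow (Set.range g) := ⟨0, by rintro _ ⟨x, rfl⟩; exact hg0 x⟩
  have hne : (Set.range g).Nonempty := Set.range_nonempty g
  have hc_le : ∀ x, c ≤ g x := fun x => csInf_le hbdd ⟨x, rfl⟩
  have h_le_c : ∀ x, g x - c ≤ dobrushin Φ := by
    intro x
    have : g x - dobrushin Φ ≤ c := by
      apply le_csInf hne
      rintro _ ⟨x', rfl⟩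
      linarith [hosc x x']
    linarith
  have gint : ∀ (P : Measure X) [IsProbabilityMeasure P], Integrable g P := by
    intro P _
    refine ⟨hgm.aestronglyMeasurable, ?_⟩
    apply HasFiniteIntegral.mono' (g := fun _ => (1 : ℝ)) (hasFiniteIntegral_const 1)
    filter_upwards with x
    rw [Real.norm_eq_abs, abs_of_nonneg (hg0 x)]
    simpa using ENNReal.toReal_mono ENNReal.one_ne_top (prob_le_one (μ := Φ x) (s := A))
  have key : ∀ (P Q : Measure X) [IsProbabilityMeasure P] [IsProbabilityMeasure Q],
      ∫ x, g x ∂P - ∫ x, g x ∂Q ≤ dobrushin Φ * tvDist P Q := by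
    intro P Q _ _
    have hdiff := integral_diff_le P Q (hgm.sub measurable_const) hα
      (fun x => sub_nonneg.2 (hc_le x)) h_le_c
    simp only [Pi.sub_apply] at hdiff
    rw [integral_sub (gint P) (integrable_const c),
        integral_sub (gint Q) (integrable_const c)] at hdiff
    simp only [integral_const, probReal_univ, measure_univ, ENNReal.toReal_one, one_smul] at hdiff
    linarith
  rw [bind_toReal μ Φ hA, bind_toReal ν Φ hA, abs_le]
  constructor
  · have := key ν μ
    rw [tv_comm ν μ] at this
    linarith
  · exact key μ ν

end Kernels

end Helpers

/-- Theorem 1: domain generalization bound. -/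
theorem stmt5 {X Z Y : Type*} [MeasurableSpace X] [MeasurableSpace Z]
    [Fintype Y] [Nonempty Y]
    {T : ℕ} (hT : 0 < T)
    (S : Fin T → Y → Measure X) (Tst : Y → Measure X)
    [∀ t y, IsProbabilityMeasure (S t y)] [∀ y, IsProbabilityMeasure (Tst y)]
    (Φ : Kernel X Z) [IsMarkovKernel Φ]
    (h : Z → Y) (L : Y → Y → ℝ)
    (hL01 : ∀ y y', L y y' ∈ Set.Icc (0:ℝ) 1)
    (hmeas : ∀ y : Y, Measurable fun z => L (h z) y)
    (κ ε : ℝ)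
    (hκ : ∀ i j : Fin T, ∀ y : Y, tvDist ((S i y).bind Φ) ((S j y).bind Φ) ≤ κ)
    (hε : ∀ y : Y, ∃ t : Fin T, tvDist (Tst y) (S t y) ≤ ε) :
    BER Tst Φ h L ≤
      (1 / T : ℝ) * ∑ t : Fin T, BER (S t) Φ h L + κ + dobrushin Φ * ε := by
  haveI : ∀ y, IsProbabilityMeasure ((Tst y).bind Φ) := fun y => isProb_bind _ Φ
  haveI : ∀ t y, IsProbabilityMeasure ((S t y).bind Φ) := fun t y => isProb_bind _ Φ
  haveI hXne : Nonempty X := Measure.nonempty_of_neZero (Tst (Classical.arbitrary Y))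
  have hα : 0 ≤ dobrushin Φ := dob_nonneg Φ
  have step1 : ∀ (P Q : Measure Z) [IsProbabilityMeasure P] [IsProbabilityMeasure Q],
      ∀ y : Y, ∫ z, L (h z) y ∂P ≤ ∫ z, L (h z) y ∂Q + tvDist P Q := by
    intro P Q _ _ y
    have := integral_diff_le P Q (hmeas y) one_pos.le
      (fun z => (hL01 (h z) y).1) (fun z => (hL01 (h z) y).2)
    linarith
  have hT' : (0 : ℝ) < T := by exact_mod_cast hT
  have key : ∀ y : Y, ∫ z, L (h z) y ∂((Tst y).bind Φ) ≤
      (1 / T : ℝ) * ∑ s : Fin T, ∫ z, L (h z) y ∂((S s y).bind Φ)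
        + (κ + dobrushin Φ * ε) := by
    intro y
    obtain ⟨t, ht⟩ := hε y
    have a1 : ∫ z, L (h z) y ∂((Tst y).bind Φ) ≤
        ∫ z, L (h z) y ∂((S t y).bind Φ) + dobrushin Φ * ε := by
      have h1 := step1 ((Tst y).bind Φ) ((S t y).bind Φ) y
      have h2 := tv_bind_le (Tst y) (S t y) Φ
      have h3 : dobrushin Φ * tvDist (Tst y) (S t y) ≤ dobrushin Φ * ε :=
        mul_le_mul_of_nonneg_left ht hα
      linarith
    have a3 : ∀ s : Fin T, ∫ z, L (h z) y ∂((S t y).bind Φ) ≤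
        ∫ z, L (h z) y ∂((S s y).bind Φ) + κ := by
      intro s
      have h1 := step1 ((S t y).bind Φ) ((S s y).bind Φ) y
      have h2 := hκ t s y
      linarith
    have hsum : (T : ℝ) * ∫ z, L (h z) y ∂((S t y).bind Φ) ≤
        (∑ s : Fin T, ∫ z, L (h z) y ∂((S s y).bind Φ)) + (T : ℝ) * κ := by
      have h6 := Finset.sum_le_sum (fun s _ => a3 s) (s := Finset.univ)
      simpa [Finset.sum_add_distrib, Finset.sum_const, Finset.card_univ,
        nsmul_eq_mul] using h6
    have a4 : ∫ z, L (h z) y ∂((S t y).bind Φ) ≤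
        (1 / T : ℝ) * ∑ s : Fin T, ∫ z, L (h z) y ∂((S s y).bind Φ) + κ := by
      have h5 : (T : ℝ) * (∫ z, L (h z) y ∂((S t y).bind Φ)) ≤
          (T : ℝ) * ((1 / T : ℝ) * ∑ s : Fin T, ∫ z, L (h z) y ∂((S s y).bind Φ) + κ) := by
        rw [mul_add, ← mul_assoc, mul_one_div, div_self (ne_of_gt hT'), one_mul]
        linarith
      exact le_of_mul_le_mul_left h5 hT'
    linarith
  have hcard : (0 : ℝ) < Fintype.card Y := by exact_mod_cast Fintype.card_pos
  have hcne : ((Fintype.card Y : ℝ)) ≠ 0 := ne_of_gt hcard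
  unfold BER
  calc (1 / (Fintype.card Y) : ℝ) * ∑ y : Y, ∫ z, L (h z) y ∂((Tst y).bind Φ)
      ≤ (1 / (Fintype.card Y) : ℝ) * ∑ y : Y,
          ((1 / T : ℝ) * ∑ s : Fin T, ∫ z, L (h z) y ∂((S s y).bind Φ)
            + (κ + dobrushin Φ * ε)) := by
        apply mul_le_mul_of_nonneg_left _ (by positivity)
        exact Finset.sum_le_sum (fun y _ => key y)
    _ = (1 / T : ℝ) * ∑ t : Fin T,
          ((1 / (Fintype.card Y) : ℝ) * ∑ y : Y, ∫ z, L (h z) y ∂((S t y).bind Φ))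
          + κ + dobrushin Φ * ε := by
        have hAB : (1 / (Fintype.card Y) : ℝ) *
            ∑ y : Y, ((1 / T : ℝ) * ∑ s : Fin T, ∫ z, L (h z) y ∂((S s y).bind Φ)) =
            (1 / T : ℝ) * ∑ t : Fin T,
              ((1 / (Fintype.card Y) : ℝ) * ∑ y : Y, ∫ z, L (h z) y ∂((S t y).bind Φ)) := by
          simp only [Finset.mul_sum]
          rw [Finset.sum_comm]
          exact Finset.sum_congr rfl fun s _ => Finset.sum_congr rfl fun y _ => by ring
        rw [Finset.sum_add_distrib, mul_add, hAB, Finset.sum_const, Finset.card_univ,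
          nsmul_eq_mul, ← mul_assoc, one_div_mul_cancel hcne, one_mul, ← add_assoc]
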